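/- Any two 2-term polyadic decompositions of Φ_{1,2,1} (the scalar product of two vectors in ℝ², viewed as multiplication of 1×2 by 2×1 matrices) are equivalent under scaling and trace transformations. -/

import Mathlib

open Matrix

private lemma aux_eq (U V : Fin 2 → (Fin 2 → ℝ)) (W : Fin 2 → ℝ)
    (h : ∀ u v : Fin 2 → ℝ, u ⬝ᵥ v = ∑ r, (U r ⬝ᵥ u) * (V r ⬝ᵥ v) * W r) :
    (Matrix.of U)ᵀ * (Matrix.diagonal W * Matrix.of V) = 1 := by
  ext i j
  have key := h (Pi.single i 1) (Pi.single j 1)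
  simp only [dotProduct_single, single_dotProduct, one_mul, mul_one,
    Pi.single_apply] at key
  rw [Matrix.mul_apply, Matrix.one_apply]
  simp only [Matrix.diagonal_mul, Matrix.transpose_apply, Matrix.of_apply]
  rw [show (if i = j then (1:ℝ) else 0) = (if j = i then (1:ℝ) else 0) by
    simp [eq_comm], key]
  exact Finset.sum_congr rfl fun r _ => by ring

private lemma aux_facts (U V : Fin 2 → (Fin 2 → ℝ)) (W : Fin 2 → ℝ)
    (h : ∀ u v : Fin 2 → ℝ, u ⬝ᵥ v = ∑ r, (U r ⬝ᵥ u) * (V r ⬝ᵥ v) * W r) :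
    IsUnit (Matrix.of U)ᵀ ∧ (∀ r, W r ≠ 0) ∧
      (∀ r, V r = (W r)⁻¹ • ((Matrix.of U)⁻¹ *ᵥ Pi.single r 1)) := by
  have hA := aux_eq U V W h
  set M : Matrix (Fin 2) (Fin 2) ℝ := Matrix.of U
  set N : Matrix (Fin 2) (Fin 2) ℝ := Matrix.of V
  set D : Matrix (Fin 2) (Fin 2) ℝ := Matrix.diagonal W
  have uMT : IsUnit Mᵀ := IsUnit.of_mul_eq_one _ hA
  have uD : IsUnit D := by
    refine IsUnit.of_mul_eq_one (N * Mᵀ) ?_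
    rw [← Matrix.mul_assoc]
    exact mul_eq_one_comm.mp hA
  have hW : ∀ r, W r ≠ 0 := by
    have hdet : IsUnit D.det := (Matrix.isUnit_iff_isUnit_det _).mp uD
    rw [Matrix.det_diagonal] at hdet
    intro r
    exact Finset.prod_ne_zero_iff.mp hdet.ne_zero r (Finset.mem_univ r)
  refine ⟨uMT, hW, fun r => ?_⟩
  have dM : IsUnit M.det := by
    rw [← Matrix.det_transpose]
    exact (Matrix.isUnit_iff_isUnit_det _).mp uMT
  have hMinv : M⁻¹ = Nᵀ * D := by
    rw [← Matrix.transpose_transpose M⁻¹, Matrix.transpose_nonsing_inv,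
      Matrix.inv_eq_right_inv hA, Matrix.transpose_mul, Matrix.diagonal_transpose]
  have hDe : D *ᵥ Pi.single r 1 = W r • (Pi.single r 1 : Fin 2 → ℝ) := by
    funext i
    simp only [D, Matrix.mulVec_single_one, Matrix.col_apply, Matrix.diagonal_apply, Pi.smul_apply,
      Pi.single_apply, smul_eq_mul, mul_one, mul_ite, mul_zero]
    split_ifs with hh
    · rw [hh]
    · rfl
  rw [hMinv, ← Matrix.mulVec_mulVec, hDe, Matrix.mulVec_smul, smul_smul,
    inv_mul_cancel₀ (hW r), one_smul]
  funext i
  simp [N, Matrix.mulVec_single]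

theorem stmt16 (U V U' V' : Fin 2 → (Fin 2 → ℝ)) (W W' : Fin 2 → ℝ)
    (h : ∀ u v : Fin 2 → ℝ, u ⬝ᵥ v = ∑ r, (U r ⬝ᵥ u) * (V r ⬝ᵥ v) * W r)
    (h' : ∀ u v : Fin 2 → ℝ, u ⬝ᵥ v = ∑ r, (U' r ⬝ᵥ u) * (V' r ⬝ᵥ v) * W' r) :
    ∃ (σ : Equiv.Perm (Fin 2)) (Q : Matrix (Fin 2) (Fin 2) ℝ) (p ρ : ℝ)
      (lam mu nu : Fin 2 → ℝ),
      IsUnit Q ∧ p ≠ 0 ∧ ρ ≠ 0 ∧ (∀ r, lam r * mu r * nu r = 1) ∧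
      (∀ r, lam r • U' r = p • (Q⁻¹ *ᵥ U (σ r))) ∧
      (∀ r, mu r • V' r = ρ⁻¹ • (Qᵀ *ᵥ V (σ r))) ∧
      (∀ r, nu r * W' r = p⁻¹ * W (σ r) * ρ) := by
  obtain ⟨uMT, hW, hV⟩ := aux_facts U V W h
  obtain ⟨uM'T, hW', hV'⟩ := aux_facts U' V' W' h'
  set M : Matrix (Fin 2) (Fin 2) ℝ := Matrix.of U
  set M' : Matrix (Fin 2) (Fin 2) ℝ := Matrix.of U'
  have dMT : IsUnit Mᵀ.det := (Matrix.isUnit_iff_isUnit_det _).mp uMT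
  have dM'T : IsUnit M'ᵀ.det := (Matrix.isUnit_iff_isUnit_det _).mp uM'T
  have dM : IsUnit M.det := by rwa [Matrix.det_transpose] at dMT
  have dM' : IsUnit M'.det := by rwa [Matrix.det_transpose] at dM'T
  refine ⟨Equiv.refl (Fin 2), Mᵀ * (M'ᵀ)⁻¹, 1, 1, fun _ => 1, fun r => W' r * (W r)⁻¹,
    fun r => W r * (W' r)⁻¹, ?_, one_ne_zero, one_ne_zero, ?_, ?_, ?_, ?_⟩
  · refine IsUnit.of_mul_eq_one (M'ᵀ * (Mᵀ)⁻¹) ?_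
    rw [Matrix.mul_assoc, ← Matrix.mul_assoc ((M'ᵀ)⁻¹),
      Matrix.nonsing_inv_mul _ dM'T, Matrix.one_mul, Matrix.mul_nonsing_inv _ dMT]
  · intro r
    field_simp [hW r, hW' r]
  · intro r
    have hQinv : (Mᵀ * (M'ᵀ)⁻¹)⁻¹ = M'ᵀ * (Mᵀ)⁻¹ := by
      refine Matrix.inv_eq_right_inv ?_
      rw [Matrix.mul_assoc, ← Matrix.mul_assoc ((M'ᵀ)⁻¹),
        Matrix.nonsing_inv_mul _ dM'T, Matrix.one_mul, Matrix.mul_nonsing_inv _ dMT]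
    have hUr : U (Equiv.refl (Fin 2) r) = Mᵀ *ᵥ Pi.single r 1 := by
      funext i; simp [M, Matrix.mulVec_single]
    have hUr' : U' r = M'ᵀ *ᵥ Pi.single r 1 := by
      funext i; simp [M', Matrix.mulVec_single]
    rw [one_smul, one_smul, hQinv, hUr, Matrix.mulVec_mulVec, Matrix.mul_assoc,
      Matrix.nonsing_inv_mul _ dMT, Matrix.mul_one, hUr']
  · intro r
    have hQT : (Mᵀ * (M'ᵀ)⁻¹)ᵀ = M'⁻¹ * M := by
      rw [Matrix.transpose_mul, Matrix.transpose_transpose,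
        ← Matrix.transpose_nonsing_inv, Matrix.transpose_transpose]
    show (W' r * (W r)⁻¹) • V' r = (1:ℝ)⁻¹ • ((Mᵀ * (M'ᵀ)⁻¹)ᵀ *ᵥ V (Equiv.refl (Fin 2) r))
    simp only [Equiv.refl_apply]
    rw [inv_one, one_smul, hQT, hV r, hV' r, Matrix.mulVec_smul,
      Matrix.mulVec_mulVec, Matrix.mul_assoc, Matrix.mul_nonsing_inv _ dM,
      Matrix.mul_one, smul_smul]
    congr 1
    rw [mul_comm (W' r), mul_assoc, mul_inv_cancel₀ (hW' r), mul_one]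
  · intro r
    show (W r * (W' r)⁻¹) * W' r = (1:ℝ)⁻¹ * W (Equiv.refl (Fin 2) r) * 1
    simp [mul_assoc, inv_mul_cancel₀ (hW' r)]
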